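/- Let n ≥ 1 and 0 ≤ p ≤ n, and let J be the n×n real diagonal matrix whose first p diagonal entries are 1 and whose remaining n−p diagonal entries are −1. Then for every invertible n×n real matrix g there exist real n×n matrices k, a, h such that kᵀ·k = 1 (k is orthogonal), a is diagonal and invertible, hᵀ·J·h = J (h preserves the quadratic form of signature (p, n−p)), and g = k·a·h. -/

import Mathlib

open Matrix Finset

namespace Stmt14Aux

variable {n : ℕ}

/-- The subspace of vectors supported on a finset `s`. -/
def Wsub (s : Finset (Fin n)) : Submodule ℝ (Fin n → ℝ) where
  carrier := {x | ∀ i, i ∉ s → x i = 0}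
  add_mem' := fun ha hb i hi => by simp [ha i hi, hb i hi]
  zero_mem' := fun i _ => rfl
  smul_mem' := fun c x hx i hi => by simp [hx i hi]

lemma mem_Wsub {s : Finset (Fin n)} {x : Fin n → ℝ} :
    x ∈ Wsub s ↔ ∀ i, i ∉ s → x i = 0 := Iff.rfl

lemma Wsub_eq_span (s : Finset (Fin n)) :
    Wsub s = Submodule.span ℝ
      (Set.range fun i : s => (Pi.single (i : Fin n) 1 : Fin n → ℝ)) := by
  apply le_antisymm
  · intro x hx
    have hx' : x = ∑ i ∈ s, x i • (Pi.single i 1 : Fin n → ℝ) := by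
      ext j
      rw [Finset.sum_apply]
      by_cases hj : j ∈ s
      · rw [Finset.sum_eq_single j (fun i _ hij => by simp [Pi.single_eq_of_ne (Ne.symm hij)])
          (fun h => absurd hj h)]
        simp
      · rw [hx j hj, Finset.sum_eq_zero]
        intro i hi
        have : j ≠ i := fun h => hj (h ▸ hi)
        simp only [Pi.smul_apply, Pi.single_eq_of_ne this, smul_zero]
    rw [hx']
    exact Submodule.sum_mem _ fun i hi =>
      Submodule.smul_mem _ _ (Submodule.subset_span ⟨⟨i, hi⟩, rfl⟩)
  · rw [Submodule.span_le]
    rintro _ ⟨i, rfl⟩ j hj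
    exact Pi.single_eq_of_ne (fun h : j = (i : Fin n) => hj (h ▸ i.2)) 1

lemma finrank_Wsub (s : Finset (Fin n)) : Module.finrank ℝ (Wsub s) = s.card := by
  rw [Wsub_eq_span]
  have li : LinearIndependent ℝ (fun i : s => (Pi.single (i : Fin n) 1 : Fin n → ℝ)) := by
    have h1 := (Pi.basisFun ℝ (Fin n)).linearIndependent
    have h2 := h1.comp (fun i : s => (i : Fin n)) Subtype.val_injective
    simpa [Function.comp_def, Pi.basisFun_apply] using h2
  rw [finrank_span_eq_card li, Fintype.card_coe]


lemma quad_diag (w x : Fin n → ℝ) :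
    x ⬝ᵥ (Matrix.diagonal w *ᵥ x) = ∑ i, w i * x i ^ 2 := by
  simp [dotProduct, mulVec_diagonal]
  exact Finset.sum_congr rfl fun i _ => by ring

lemma quad_congr (A M : Matrix (Fin n) (Fin n) ℝ) (hA : Aᵀ = A) (y : Fin n → ℝ) :
    (M *ᵥ y) ⬝ᵥ (A *ᵥ (M *ᵥ y)) = y ⬝ᵥ ((Mᵀ * A * M) *ᵥ y) := by
  rw [mulVec_mulVec, dotProduct_mulVec, dotProduct_mulVec]
  congr 1
  rw [show (M *ᵥ y) = y ᵥ* Mᵀ from (vecMul_transpose M y).symm, vecMul_vecMul,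
    ← Matrix.mul_assoc]

/-- Key dimension-count inequality for Sylvester's law of inertia. -/
lemma count_le (S M₁ M₂ : Matrix (Fin n) (Fin n) ℝ)
    (h₁ : Invertible M₁) (h₂ : Invertible M₂)
    (w₁ w₂ : Fin n → ℝ) (hw₂ : ∀ i, w₂ i ≠ 0)
    (hq₁ : ∀ y, (M₁ *ᵥ y) ⬝ᵥ (S *ᵥ (M₁ *ᵥ y)) = ∑ i, w₁ i * y i ^ 2)
    (hq₂ : ∀ y, (M₂ *ᵥ y) ⬝ᵥ (S *ᵥ (M₂ *ᵥ y)) = ∑ i, w₂ i * y i ^ 2) :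
    (Finset.univ.filter fun i => 0 < w₁ i).card ≤
      (Finset.univ.filter fun i => 0 < w₂ i).card := by
  classical
  set P₁ : Finset (Fin n) := Finset.univ.filter fun i => 0 < w₁ i with hP₁
  set P₂ : Finset (Fin n) := Finset.univ.filter fun i => 0 < w₂ i with hP₂
  set N₂ : Finset (Fin n) := Finset.univ.filter fun i => w₂ i < 0 with hN₂
  have hN₂c : N₂ = P₂ᶜ := by
    rw [hN₂, hP₂, Finset.compl_filter]
    exact Finset.filter_congr fun i _ => by
      constructor
      · intro h; exact not_lt.2 h.le
      · intro h; exact lt_of_le_of_ne (not_lt.1 h) (hw₂ i)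
  let e₁ := M₁.toLinearEquiv' h₁
  let e₂ := M₂.toLinearEquiv' h₂
  set V₁ : Submodule ℝ (Fin n → ℝ) := (Wsub P₁).map (e₁ : (Fin n → ℝ) →ₗ[ℝ] Fin n → ℝ)
  set V₂ : Submodule ℝ (Fin n → ℝ) := (Wsub N₂).map (e₂ : (Fin n → ℝ) →ₗ[ℝ] Fin n → ℝ)
  have he₁ : ∀ y, e₁ y = M₁ *ᵥ y := fun y => by
    simp [e₁, Matrix.toLinearEquiv', Matrix.GeneralLinearGroup.toLin,
      Matrix.toLin'_apply]
  have he₂ : ∀ y, e₂ y = M₂ *ᵥ y := fun y => by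
    simp [e₂, Matrix.toLinearEquiv', Matrix.GeneralLinearGroup.toLin,
      Matrix.toLin'_apply]
  have hinf : V₁ ⊓ V₂ = ⊥ := by
    rw [eq_bot_iff]
    rintro x ⟨hx₁, hx₂⟩
    obtain ⟨y₁, hy₁, rfl⟩ := hx₁
    obtain ⟨y₂, hy₂, hxe⟩ := hx₂
    have hQ₁ : (e₁ : (Fin n → ℝ) →ₗ[ℝ] Fin n → ℝ) y₁ ⬝ᵥ
        (S *ᵥ ((e₁ : (Fin n → ℝ) →ₗ[ℝ] Fin n → ℝ) y₁)) = ∑ i, w₁ i * y₁ i ^ 2 := by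
      rw [show ((e₁ : (Fin n → ℝ) →ₗ[ℝ] Fin n → ℝ) y₁ : Fin n → ℝ) = M₁ *ᵥ y₁ from he₁ y₁]
      exact hq₁ y₁
    have hQ₂ : (e₁ : (Fin n → ℝ) →ₗ[ℝ] Fin n → ℝ) y₁ ⬝ᵥ
        (S *ᵥ ((e₁ : (Fin n → ℝ) →ₗ[ℝ] Fin n → ℝ) y₁)) = ∑ i, w₂ i * y₂ i ^ 2 := by
      rw [← hxe, show ((e₂ : (Fin n → ℝ) →ₗ[ℝ] Fin n → ℝ) y₂ : Fin n → ℝ) = M₂ *ᵥ y₂ from he₂ y₂]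
      exact hq₂ y₂
    have hle : ∑ i, w₁ i * y₁ i ^ 2 ≤ 0 := by
      rw [← hQ₁, hQ₂]
      apply Finset.sum_nonpos
      intro i _
      by_cases hi : i ∈ N₂
      · have : w₂ i < 0 := (Finset.mem_filter.1 hi).2
        nlinarith [sq_nonneg (y₂ i)]
      · rw [hy₂ i hi]
        simp
    have hy₁0 : y₁ = 0 := by
      by_contra hne
      obtain ⟨j, hj⟩ := Function.ne_iff.1 hne
      have hjP : j ∈ P₁ := by
        by_contra hjn
        exact hj (hy₁ j hjn)
      have hjpos : 0 < w₁ j := (Finset.mem_filter.1 hjP).2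
      have : (0:ℝ) < ∑ i, w₁ i * y₁ i ^ 2 := by
        apply Finset.sum_pos' _ ⟨j, Finset.mem_univ j, _⟩
        · intro i _
          by_cases hi : i ∈ P₁
          · have : 0 < w₁ i := (Finset.mem_filter.1 hi).2
            positivity
          · rw [hy₁ i hi]; simp
        · have : y₁ j ≠ 0 := hj
          positivity
      linarith
    rw [hy₁0, map_zero]
    exact Submodule.zero_mem _
  have hr₁ : Module.finrank ℝ V₁ = P₁.card := by
    rw [show V₁ = (Wsub P₁).map (e₁ : (Fin n → ℝ) →ₗ[ℝ] Fin n → ℝ) from rfl,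
      LinearEquiv.finrank_map_eq, finrank_Wsub]
  have hr₂ : Module.finrank ℝ V₂ = n - P₂.card := by
    rw [show V₂ = (Wsub N₂).map (e₂ : (Fin n → ℝ) →ₗ[ℝ] Fin n → ℝ) from rfl,
      LinearEquiv.finrank_map_eq, finrank_Wsub, hN₂c, Finset.card_compl, Fintype.card_fin]
  have hsum := Submodule.finrank_sup_add_finrank_inf_eq V₁ V₂
  rw [hinf] at hsum
  have hsup : Module.finrank ℝ ↥(V₁ ⊔ V₂) ≤ n := by
    have := Submodule.finrank_le (V₁ ⊔ V₂)
    rwa [Module.finrank_fin_fun] at this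
  have hcard : P₂.card ≤ n := le_trans (Finset.card_le_univ P₂) (by simp)
  simp only [finrank_bot, add_zero] at hsum
  rw [hr₁, hr₂] at hsum
  omega


lemma card_filter_lt {n p : ℕ} (hp : p ≤ n) :
    (Finset.univ.filter fun i : Fin n => (i : ℕ) < p).card = p := by
  have : (Finset.univ.filter fun i : Fin n => (i : ℕ) < p)
      = Finset.univ.map (Fin.castLEEmb hp) := by
    ext j
    simp only [Finset.mem_filter, Finset.mem_univ, true_and, Finset.mem_map]
    constructor
    · intro hj
      refine ⟨⟨(j : ℕ), hj⟩, ?_⟩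
      ext
      simp [Fin.castLEEmb]
    · rintro ⟨i, rfl⟩
      simpa [Fin.castLEEmb] using i.2
  rw [this, Finset.card_map, Finset.card_univ, Fintype.card_fin]

lemma lower_mem_iff {n : ℕ} (s : Finset (Fin n))
    (hlow : ∀ i j : Fin n, i ≤ j → j ∈ s → i ∈ s) (i : Fin n) :
    i ∈ s ↔ (i : ℕ) < s.card := by
  constructor
  · intro hi
    have hsub : Finset.Iic i ⊆ s := fun j hj => hlow j i (Finset.mem_Iic.1 hj) hi
    have h1 := Finset.card_le_card hsub
    rw [Fin.card_Iic] at h1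
    omega
  · intro hi
    by_contra hni
    have hsub : s ⊆ Finset.Iio i := by
      intro j hj
      rw [Finset.mem_Iio]
      by_contra hij
      exact hni (hlow i j (not_lt.1 hij) hj)
    have h1 := Finset.card_le_card hsub
    rw [Fin.card_Iio] at h1
    omega

lemma exists_perm (lam : Fin n → ℝ) :
    ∃ σ : Equiv.Perm (Fin n), ∀ i : Fin n,
      ((i : ℕ) < (Finset.univ.filter fun j => 0 < lam j).card ↔ 0 < lam (σ i)) := by
  classical
  refine ⟨Tuple.sort (fun i => -lam i), ?_⟩
  have hmono := Tuple.monotone_sort (fun i => -lam i)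
  set σ := Tuple.sort (fun i => -lam i) with hσdef
  set s : Finset (Fin n) := Finset.univ.filter fun i => 0 < lam (σ i) with hs
  have hcard : s.card = (Finset.univ.filter fun j => 0 < lam j).card := by
    apply Finset.card_bij (fun i _ => σ i)
    · intro a ha
      simp only [hs, Finset.mem_filter, Finset.mem_univ, true_and] at ha ⊢
      exact ha
    · intro a _ b _ hab
      exact σ.injective hab
    · intro b hb
      refine ⟨σ.symm b, ?_, by simp⟩
      simp only [hs, Finset.mem_filter, Finset.mem_univ, true_and, Equiv.apply_symm_apply]
      exact (Finset.mem_filter.1 hb).2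
  have hlow : ∀ i j : Fin n, i ≤ j → j ∈ s → i ∈ s := by
    intro i j hij hj
    simp only [hs, Finset.mem_filter, Finset.mem_univ, true_and] at hj ⊢
    have h2 := hmono hij
    simp only [Function.comp_apply] at h2
    linarith
  intro i
  rw [← hcard, ← lower_mem_iff s hlow i]
  simp [hs]

end Stmt14Aux

open Stmt14Aux

theorem stmt14 (n p : ℕ) (hn : 1 ≤ n) (hp : p ≤ n)
    (J : Matrix (Fin n) (Fin n) ℝ)
    (hJ : J = Matrix.diagonal (fun i : Fin n => if (i : ℕ) < p then (1 : ℝ) else -1))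
    (g : Matrix (Fin n) (Fin n) ℝ) (hg : IsUnit g.det) :
    ∃ k a h : Matrix (Fin n) (Fin n) ℝ,
      kᵀ * k = 1 ∧ a.IsDiag ∧ IsUnit a.det ∧ hᵀ * J * h = J ∧ g = k * a * h := by
  classical
  set w₂ : Fin n → ℝ := fun i => if (i : ℕ) < p then 1 else -1 with hw₂def
  have hw₂ne : ∀ i, w₂ i ≠ 0 := by
    intro i
    rw [hw₂def]
    dsimp only
    split <;> norm_num
  have hJT : Jᵀ = J := by rw [hJ, Matrix.diagonal_transpose]
  have hJJ : J * J = 1 := by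
    have h1 : (fun i : Fin n => w₂ i * w₂ i) = fun _ => (1 : ℝ) := by
      funext i
      rw [hw₂def]
      dsimp only
      split <;> norm_num
    rw [hJ, Matrix.diagonal_mul_diagonal, h1, Matrix.diagonal_one]
  set S := g * J * gᵀ with hSdef
  have hST : Sᵀ = S := by
    rw [hSdef, Matrix.transpose_mul, Matrix.transpose_mul, Matrix.transpose_transpose, hJT,
      Matrix.mul_assoc]
  have hS : S.IsHermitian := by
    rw [Matrix.IsHermitian, Matrix.conjTranspose_eq_transpose_of_trivial]
    exact hST
  set lam := hS.eigenvalues with hlamdef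
  set U : Matrix (Fin n) (Fin n) ℝ := (hS.eigenvectorUnitary : Matrix (Fin n) (Fin n) ℝ)
    with hUdef
  have hsU : star U = Uᵀ := by
    rw [Matrix.star_eq_conjTranspose, Matrix.conjTranspose_eq_transpose_of_trivial]
  have hUmem := Unitary.mem_iff.1 hS.eigenvectorUnitary.2
  have hUtU : Uᵀ * U = 1 := by rw [← hsU]; exact hUmem.1
  have hUUt : U * Uᵀ = 1 := by rw [← hsU]; exact hUmem.2
  have hspec : S = U * Matrix.diagonal lam * Uᵀ := by
    have h1 := hS.spectral_theorem
    rw [Unitary.conjStarAlgAut_apply] at h1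
    change S = U * _ * star U at h1
    rw [hsU] at h1
    simpa using h1
  have hdetg : g.det ≠ 0 := by
    intro h0
    rw [h0] at hg
    simpa using hg
  have hdetJ : J.det ≠ 0 := by
    rw [hJ, Matrix.det_diagonal]
    exact Finset.prod_ne_zero_iff.2 fun i _ => hw₂ne i
  have hdetS : S.det ≠ 0 := by
    rw [hSdef, Matrix.det_mul, Matrix.det_mul, Matrix.det_transpose]
    exact mul_ne_zero (mul_ne_zero hdetg hdetJ) hdetg
  have hlamne : ∀ i, lam i ≠ 0 := by
    have hdet : S.det = ∏ i, lam i := by simpa using hS.det_eq_prod_eigenvalues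
    rw [hdet] at hdetS
    intro i
    exact Finset.prod_ne_zero_iff.1 hdetS i (Finset.mem_univ i)
  set g' := g⁻¹ with hg'def
  have hgg' : g * g' = 1 := Matrix.mul_nonsing_inv g hg
  have hg'g : g' * g = 1 := Matrix.nonsing_inv_mul g hg
  have hgTg'T : gᵀ * g'ᵀ = 1 := by rw [← Matrix.transpose_mul, hg'g, Matrix.transpose_one]
  have hg'TgT : g'ᵀ * gᵀ = 1 := by rw [← Matrix.transpose_mul, hgg', Matrix.transpose_one]
  have hUinv : Invertible U := ⟨Uᵀ, hUtU, hUUt⟩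
  have hg'Tinv : Invertible g'ᵀ := ⟨gᵀ, hgTg'T, hg'TgT⟩
  -- the two quadratic identities
  have hUSU : Uᵀ * S * U = Matrix.diagonal lam := by
    rw [hspec]
    calc Uᵀ * (U * Matrix.diagonal lam * Uᵀ) * U
        = (Uᵀ * U) * Matrix.diagonal lam * (Uᵀ * U) := by
          simp only [Matrix.mul_assoc]
      _ = Matrix.diagonal lam := by rw [hUtU, Matrix.one_mul, Matrix.mul_one]
  have hgSg : g'ᵀᵀ * S * g'ᵀ = J := by
    rw [Matrix.transpose_transpose, hSdef]
    calc g' * (g * J * gᵀ) * g'ᵀ = (g' * g) * J * (gᵀ * g'ᵀ) := by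
          simp only [Matrix.mul_assoc]
      _ = J := by rw [hg'g, hgTg'T, Matrix.one_mul, Matrix.mul_one]
  have hq₁ : ∀ y, (U *ᵥ y) ⬝ᵥ (S *ᵥ (U *ᵥ y)) = ∑ i, lam i * y i ^ 2 := by
    intro y
    rw [quad_congr S U hST y, hUSU, quad_diag]
  have hq₂ : ∀ y, (g'ᵀ *ᵥ y) ⬝ᵥ (S *ᵥ (g'ᵀ *ᵥ y)) = ∑ i, w₂ i * y i ^ 2 := by
    intro y
    rw [quad_congr S g'ᵀ hST y, hgSg, hJ, quad_diag]
  -- Sylvester count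
  have hcard2 : (Finset.univ.filter fun i => 0 < w₂ i).card = p := by
    have : (Finset.univ.filter fun i => 0 < w₂ i)
        = Finset.univ.filter fun i : Fin n => (i : ℕ) < p := by
      apply Finset.filter_congr
      intro i _
      rw [hw₂def]
      dsimp only
      constructor
      · intro hpos
        by_contra hnot
        rw [if_neg hnot] at hpos
        norm_num at hpos
      · intro hlt
        rw [if_pos hlt]
        norm_num
    rw [this, card_filter_lt hp]
  have hcount : (Finset.univ.filter fun i => 0 < lam i).card = p := by
    have h1 := count_le S U g'ᵀ hUinv hg'Tinv lam w₂ hw₂ne hq₁ hq₂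
    have h2 := count_le S g'ᵀ U hg'Tinv hUinv w₂ lam hlamne hq₂ hq₁
    omega
  obtain ⟨σ, hσ⟩ := exists_perm lam
  rw [hcount] at hσ
  -- construction
  set sq : Fin n → ℝ := fun i => Real.sqrt |lam (σ i)| with hsqdef
  have hsq_pos : ∀ i, 0 < sq i := fun i => Real.sqrt_pos.2 (abs_pos.2 (hlamne _))
  have hsq_sq : ∀ i, sq i * sq i = |lam (σ i)| := fun i =>
    Real.mul_self_sqrt (abs_nonneg _)
  set k := U.submatrix id ⇑σ with hkdef
  set a := Matrix.diagonal sq with hadef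
  set a' := Matrix.diagonal (fun i => (sq i)⁻¹) with ha'def
  set D' := Matrix.diagonal (fun i => lam (σ i)) with hD'def
  set E' := Matrix.diagonal (fun i => (lam (σ i))⁻¹) with hE'def
  have hkT : kᵀ = Uᵀ.submatrix ⇑σ id := by rw [hkdef, Matrix.transpose_submatrix]
  have hktk : kᵀ * k = 1 := by
    rw [hkT, hkdef]
    rw [show (Uᵀ.submatrix ⇑σ id * U.submatrix id ⇑σ)
        = Uᵀ.submatrix ⇑σ ⇑(Equiv.refl (Fin n)) * U.submatrix ⇑(Equiv.refl (Fin n)) ⇑σ from rfl,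
      Matrix.submatrix_mul_equiv, hUtU, Matrix.submatrix_one_equiv]
  have hkkT : k * kᵀ = 1 := by
    rw [hkT, hkdef, Matrix.submatrix_mul_equiv, hUUt]
    exact Matrix.submatrix_one (e := id) Function.injective_id
  have hkD : k * D' * kᵀ = S := by
    rw [hkT, hkdef, hD'def]
    have hsub : (Matrix.diagonal (fun i => lam (σ i)) : Matrix (Fin n) (Fin n) ℝ)
        = (Matrix.diagonal lam).submatrix ⇑σ ⇑σ := by
      rw [Matrix.submatrix_diagonal_equiv]
      rfl
    rw [hsub]
    rw [show U.submatrix id ⇑σ = U.submatrix ⇑(Equiv.refl (Fin n)) ⇑σ from rfl,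
      Matrix.submatrix_mul_equiv]
    rw [show (U * Matrix.diagonal lam).submatrix ⇑(Equiv.refl (Fin n)) ⇑σ
          * Uᵀ.submatrix ⇑σ id
        = (U * Matrix.diagonal lam).submatrix ⇑(Equiv.refl (Fin n)) ⇑σ
          * Uᵀ.submatrix ⇑σ ⇑(Equiv.refl (Fin n)) from rfl,
      Matrix.submatrix_mul_equiv, ← hspec]
    rfl
  -- diagonal identities
  have haa' : a * a' = 1 := by
    rw [hadef, ha'def, Matrix.diagonal_mul_diagonal]
    have h1 : (fun i => sq i * (sq i)⁻¹) = fun _ : Fin n => (1 : ℝ) := by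
      funext i
      exact mul_inv_cancel₀ (hsq_pos i).ne'
    rw [h1, Matrix.diagonal_one]
  have hE'D' : E' * D' = 1 := by
    rw [hE'def, hD'def, Matrix.diagonal_mul_diagonal]
    have h1 : (fun i => (lam (σ i))⁻¹ * lam (σ i)) = fun _ : Fin n => (1 : ℝ) := by
      funext i
      exact inv_mul_cancel₀ (hlamne _)
    rw [h1, Matrix.diagonal_one]
  have haJa : a * J * a = D' := by
    rw [hadef, hJ, hD'def, Matrix.diagonal_mul_diagonal, Matrix.diagonal_mul_diagonal]
    have h1 : (fun i => (sq i * w₂ i) * sq i) = fun i => lam (σ i) := by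
      funext i
      rw [hw₂def]
      dsimp only
      by_cases hip : (i : ℕ) < p
      · have hpos : 0 < lam (σ i) := (hσ i).1 hip
        rw [if_pos hip, mul_one, hsq_sq i, abs_of_pos hpos]
      · have hneg : lam (σ i) < 0 :=
          lt_of_le_of_ne (not_lt.1 fun hc => hip ((hσ i).2 hc)) (hlamne _)
        rw [if_neg hip]
        have h2 := hsq_sq i
        rw [abs_of_neg hneg] at h2
        nlinarith [h2]
    rw [h1]
  have ha'Ja' : a' * J * a' = E' := by
    rw [ha'def, hJ, hE'def, Matrix.diagonal_mul_diagonal, Matrix.diagonal_mul_diagonal]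
    have h1 : (fun i => ((sq i)⁻¹ * w₂ i) * (sq i)⁻¹) = fun i => (lam (σ i))⁻¹ := by
      funext i
      rw [hw₂def]
      dsimp only
      by_cases hip : (i : ℕ) < p
      · have hpos : 0 < lam (σ i) := (hσ i).1 hip
        rw [if_pos hip, mul_one, ← mul_inv, hsq_sq i, abs_of_pos hpos]
      · have hneg : lam (σ i) < 0 :=
          lt_of_le_of_ne (not_lt.1 fun hc => hip ((hσ i).2 hc)) (hlamne _)
        rw [if_neg hip]
        have h2 := hsq_sq i
        rw [abs_of_neg hneg] at h2
        have h3 : sq i ≠ 0 := (hsq_pos i).ne'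
        have h4 : lam (σ i) ≠ 0 := hlamne _
        field_simp
        nlinarith [h2]
    rw [h1]
  -- X := k * E' * kᵀ is the inverse of S
  have hXS : (k * E' * kᵀ) * S = 1 := by
    rw [← hkD]
    calc k * E' * kᵀ * (k * D' * kᵀ)
        = k * (E' * (kᵀ * k) * D') * kᵀ := by simp only [Matrix.mul_assoc]
      _ = k * kᵀ := by rw [hktk, Matrix.mul_one, hE'D', Matrix.mul_one]
      _ = 1 := hkkT
  have hXgJ : (k * E' * kᵀ) * g * J = g'ᵀ := by
    have h1 : (k * E' * kᵀ) * g * J * gᵀ = 1 := by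
      calc (k * E' * kᵀ) * g * J * gᵀ = (k * E' * kᵀ) * (g * J * gᵀ) := by
            simp only [Matrix.mul_assoc]
        _ = 1 := hXS
    calc (k * E' * kᵀ) * g * J
        = (k * E' * kᵀ) * g * J * (gᵀ * g'ᵀ) := by rw [hgTg'T, Matrix.mul_one]
      _ = ((k * E' * kᵀ) * g * J * gᵀ) * g'ᵀ := by simp only [Matrix.mul_assoc]
      _ = g'ᵀ := by rw [h1, Matrix.one_mul]
  refine ⟨k, a, a' * kᵀ * g, hktk, ?_, ?_, ?_, ?_⟩
  · rw [hadef]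
    exact Matrix.isDiag_diagonal sq
  · rw [hadef, Matrix.det_diagonal]
    exact isUnit_iff_ne_zero.2 (Finset.prod_ne_zero_iff.2 fun i _ => (hsq_pos i).ne')
  · have hT : (a' * kᵀ * g)ᵀ = gᵀ * k * a' := by
      rw [Matrix.transpose_mul, Matrix.transpose_mul, Matrix.transpose_transpose,
        ha'def, Matrix.diagonal_transpose, Matrix.mul_assoc]
    rw [hT]
    calc gᵀ * k * a' * J * (a' * kᵀ * g)
        = gᵀ * (k * (a' * J * a') * kᵀ) * g := by simp only [Matrix.mul_assoc]
      _ = gᵀ * (k * E' * kᵀ) * g := by rw [ha'Ja']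
      _ = gᵀ * ((k * E' * kᵀ) * g * (J * J)) := by
          rw [hJJ, Matrix.mul_one]
          simp only [Matrix.mul_assoc]
      _ = gᵀ * (((k * E' * kᵀ) * g * J) * J) := by simp only [Matrix.mul_assoc]
      _ = gᵀ * (g'ᵀ * J) := by rw [hXgJ]
      _ = (gᵀ * g'ᵀ) * J := by rw [Matrix.mul_assoc]
      _ = J := by rw [hgTg'T, Matrix.one_mul]
  · calc g = (k * kᵀ) * g := by rw [hkkT, Matrix.one_mul]
      _ = k * (a * a') * kᵀ * g := by rw [haa', Matrix.mul_one]
      _ = k * a * (a' * kᵀ * g) := by simp only [Matrix.mul_assoc]
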